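/- Let ζ = e^{2πi/(n+2)}. The singular points of the hypersurface X = {x_0^{n+2} + ... + x_{n+1}^{n+2} − (n+2)·x_0⋯x_{n+1} = 0} ⊂ ℙ^{n+1} are exactly the points [ζ^{a_0} : ζ^{a_1} : ... : ζ^{a_{n-1}} : ζ^{a_n} : 1] with a_0 + ... + a_n ≡ 0 (mod n+2); in particular there are exactly (n+2)^n of them. -/

import Mathlib

/-!
STATEMENT 12: Let `ζ = e^{2πi/(n+2)}`. The singular points of Schoen's hypersurface
`X = {x_0^{n+2} + ... + x_{n+1}^{n+2} − (n+2)·x_0⋯x_{n+1} = 0} ⊂ ℙ^{n+1}` are exactly the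
points `[ζ^{a_0} : ... : ζ^{a_n} : 1]` with `a_0 + ... + a_n ≡ 0 (mod n+2)`; in particular
there are exactly `(n+2)^n` of them.
-/

open MvPolynomial

/-- Schoen's polynomial `f = Σ_i x_i^{n+2} − (n+2)·x_0 x_1 ⋯ x_{n+1}`. -/
noncomputable def schoenF (n : ℕ) : MvPolynomial (Fin (n + 2)) ℂ :=
  (∑ i : Fin (n + 2), X i ^ (n + 2)) - (n + 2 : ℕ) • ∏ i : Fin (n + 2), X i

/-- `ζ = e^{2πi/(n+2)}`. -/
noncomputable def schoenZeta (n : ℕ) : ℂ :=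
  Complex.exp (2 * Real.pi * Complex.I / (n + 2))

/-- The singular locus of `X = {f = 0} ⊂ ℙ^{n+1}`: points of `X` where all partial
derivatives of `f` vanish (the conditions are scale-invariant, so they are well-defined
via the chosen representative). -/
noncomputable def schoenSing (n : ℕ) : Set (Projectivization ℂ (Fin (n + 2) → ℂ)) :=
  {p | eval p.rep (schoenF n) = 0 ∧ ∀ i : Fin (n + 2), eval p.rep (pderiv i (schoenF n)) = 0}

/-- The point `[ζ^{a_0} : ... : ζ^{a_n} : 1] ∈ ℙ^{n+1}`. -/
noncomputable def schoenPoint (n : ℕ) (a : Fin (n + 1) → ℕ) :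
    Projectivization ℂ (Fin (n + 2) → ℂ) :=
  Projectivization.mk ℂ (Fin.snoc (fun i => schoenZeta n ^ a i) 1) <| by
    intro h
    have h1 := congrFun h (Fin.last (n + 1))
    simp [Fin.snoc_last] at h1

open Finset

lemma schoen_zeta_prim (n : ℕ) : IsPrimitiveRoot (schoenZeta n) (n + 2) := by
  have h := Complex.isPrimitiveRoot_exp (n + 2) (by omega)
  rw [show ((n + 2 : ℕ) : ℂ) = (n : ℂ) + 2 from by push_cast; ring] at h
  exact h

lemma pderiv_prod_X {n : ℕ} {i : Fin (n + 2)} {s : Finset (Fin (n + 2))} (h : i ∉ s) :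
    pderiv i (∏ j ∈ s, (X j : MvPolynomial (Fin (n + 2)) ℂ)) = 0 := by
  induction s using Finset.induction with
  | empty => simp
  | insert b t hj ih =>
    rw [prod_insert hj, pderiv_mul, pderiv_X_of_ne (by rintro rfl; exact h (mem_insert_self b t)),
      ih (fun hm => h (mem_insert_of_mem hm)), zero_mul, mul_zero, add_zero]

lemma schoenF_eq (n : ℕ) :
    schoenF n = (∑ i : Fin (n + 2), X i ^ (n + 2)) -
      C ((n : ℂ) + 2) * ∏ i : Fin (n + 2), X i := by
  rw [schoenF, ← Nat.cast_smul_eq_nsmul ℂ, smul_eq_C_mul]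
  norm_num

lemma eval_schoenF (n : ℕ) (x : Fin (n + 2) → ℂ) :
    eval x (schoenF n) = (∑ i, x i ^ (n + 2)) - ((n : ℂ) + 2) * ∏ i, x i := by
  simp [schoenF_eq]

lemma eval_pderiv_schoenF (n : ℕ) (x : Fin (n + 2) → ℂ) (i : Fin (n + 2)) :
    eval x (pderiv i (schoenF n)) =
      ((n : ℂ) + 2) * (x i ^ (n + 1) - ∏ j ∈ Finset.univ.erase i, x j) := by
  rw [schoenF_eq, ← Finset.mul_prod_erase _ _ (Finset.mem_univ i), map_sub, map_sum,
    pderiv_C_mul, pderiv_mul, pderiv_X_self,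
    pderiv_prod_X (Finset.notMem_erase i _), mul_zero, add_zero, one_mul]
  have hsum : ∀ j : Fin (n + 2), pderiv i (X j ^ (n + 2) : MvPolynomial (Fin (n + 2)) ℂ) =
      if j = i then ((n + 2 : ℕ) : MvPolynomial (Fin (n + 2)) ℂ) * X i ^ (n + 1) else 0 := by
    intro j
    rcases eq_or_ne j i with rfl | hne
    · rw [if_pos rfl, pderiv_pow, pderiv_X_self, mul_one]; norm_num
    · simp [pderiv_pow, pderiv_X_of_ne hne, hne]
  rw [Finset.sum_congr rfl fun j _ => hsum j, Finset.sum_ite_eq' Finset.univ i, if_pos (mem_univ i)]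
  simp
  ring

def schoenGood (n : ℕ) (x : Fin (n + 2) → ℂ) : Prop :=
  ∀ i, x i ^ (n + 1) = ∏ j ∈ Finset.univ.erase i, x j

lemma n2_ne_zero (n : ℕ) : ((n : ℂ) + 2) ≠ 0 := by
  have : ((n + 2 : ℕ) : ℂ) ≠ 0 := Nat.cast_ne_zero.mpr (by omega)
  push_cast at this; exact this

lemma mem_schoenSing_iff {n : ℕ} (p : Projectivization ℂ (Fin (n + 2) → ℂ)) :
    p ∈ schoenSing n ↔ schoenGood n p.rep := by
  constructor
  · rintro ⟨-, hd⟩ i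
    have h := hd i
    rw [eval_pderiv_schoenF] at h
    rcases mul_eq_zero.mp h with h | h
    · exact absurd h (n2_ne_zero n)
    · exact sub_eq_zero.mp h
  · intro hg
    refine ⟨?_, fun i => ?_⟩
    · rw [eval_schoenF]
      have hkey : ∀ i : Fin (n + 2), p.rep i ^ (n + 2) = ∏ j, p.rep j := fun i => by
        rw [← Finset.mul_prod_erase _ _ (Finset.mem_univ i), ← hg i, ← pow_succ']
      rw [Finset.sum_congr rfl fun i _ => hkey i, Finset.sum_const, card_univ,
        Fintype.card_fin, nsmul_eq_mul]
      push_cast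
      ring
    · rw [eval_pderiv_schoenF, hg i, sub_self, mul_zero]

lemma schoenGood_smul {n : ℕ} {x : Fin (n + 2) → ℂ} (c : ℂ) (h : schoenGood n x) :
    schoenGood n (c • x) := by
  intro i
  have hcard : (Finset.univ.erase i).card = n + 1 := by
    simp [card_erase_of_mem (mem_univ i), card_univ]
  simp only [Pi.smul_apply, smul_eq_mul, mul_pow, Finset.prod_mul_distrib, prod_const, hcard, h i]

lemma schoenGood_smul_iff {n : ℕ} {x : Fin (n + 2) → ℂ} {c : ℂ} (hc : c ≠ 0) :
    schoenGood n (c • x) ↔ schoenGood n x := by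
  constructor
  · intro h
    have := schoenGood_smul c⁻¹ h
    rwa [inv_smul_smul₀ hc] at this
  · exact schoenGood_smul c

lemma schoenGood_mk_rep_iff {n : ℕ} {v : Fin (n + 2) → ℂ} (hv : v ≠ 0) :
    schoenGood n (Projectivization.mk ℂ v hv).rep ↔ schoenGood n v := by
  obtain ⟨a, ha⟩ := Projectivization.exists_smul_eq_mk_rep ℂ v hv
  rw [← ha, Units.smul_def, schoenGood_smul_iff a.ne_zero]

lemma schoenGood_ne_zero {n : ℕ} {x : Fin (n + 2) → ℂ} (hx : x ≠ 0)
    (h : schoenGood n x) (i : Fin (n + 2)) : x i ≠ 0 := by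
  intro h0
  obtain ⟨k, hk, hk0⟩ : ∃ k ∈ Finset.univ.erase i, x k = 0 := by
    apply Finset.prod_eq_zero_iff.mp
    rw [← h i, h0, zero_pow (by omega)]
  have hki : k ≠ i := (Finset.mem_erase.mp hk).1
  apply hx
  funext j
  have : x j ^ (n + 1) = 0 := by
    rw [h j]
    rcases eq_or_ne j i with rfl | hji
    · exact Finset.prod_eq_zero (Finset.mem_erase.mpr ⟨hki, mem_univ k⟩) hk0
    · exact Finset.prod_eq_zero (Finset.mem_erase.mpr ⟨hji.symm, mem_univ i⟩) h0
  simpa using pow_eq_zero_iff (by omega : n + 1 ≠ 0) |>.mp this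

lemma schoenVec_ne_zero (n : ℕ) (a : Fin (n + 1) → ℕ) :
    (Fin.snoc (fun i => schoenZeta n ^ a i) 1 : Fin (n + 2) → ℂ) ≠ 0 := by
  intro h
  have h1 := congrFun h (Fin.last (n + 1))
  simp [Fin.snoc_last] at h1

lemma schoenZeta_pow_mod (n a : ℕ) : schoenZeta n ^ a = schoenZeta n ^ (a % (n + 2)) := by
  conv_lhs => rw [← Nat.div_add_mod a (n + 2)]
  rw [pow_add, pow_mul, (schoen_zeta_prim n).pow_eq_one, one_pow, one_mul]

lemma schoenGood_vec {n : ℕ} {a : Fin (n + 1) → ℕ} (ha : (∑ i, a i) % (n + 2) = 0) :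
    schoenGood n (Fin.snoc (fun i => schoenZeta n ^ a i) 1 : Fin (n + 2) → ℂ) := by
  set v : Fin (n + 2) → ℂ := Fin.snoc (fun i => schoenZeta n ^ a i) 1 with hv
  have hv1 : ∀ j, v j ^ (n + 2) = 1 := by
    intro j
    induction j using Fin.lastCases with
    | last => simp [hv, Fin.snoc_last]
    | cast i =>
      rw [hv]
      simp only [Fin.snoc_castSucc]
      rw [← pow_mul, mul_comm, pow_mul, (schoen_zeta_prim n).pow_eq_one, one_pow]
  have hne : ∀ j, v j ≠ 0 := by
    intro j h0
    have := hv1 j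
    rw [h0, zero_pow (by omega)] at this
    exact one_ne_zero this.symm
  have hprod : ∏ j, v j = 1 := by
    rw [Fin.prod_univ_castSucc]
    simp only [hv, Fin.snoc_castSucc, Fin.snoc_last, mul_one]
    rw [Finset.prod_pow_eq_pow_sum, (schoen_zeta_prim n).pow_eq_one_iff_dvd]
    exact Nat.dvd_of_mod_eq_zero ha
  intro i
  apply mul_left_cancel₀ (hne i)
  rw [Finset.mul_prod_erase _ _ (Finset.mem_univ i), hprod, ← pow_succ', hv1 i]

lemma schoenPoint_inj {n : ℕ} {a b : Fin (n + 1) → ℕ} (ha : ∀ i, a i < n + 2)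
    (hb : ∀ i, b i < n + 2) (h : schoenPoint n a = schoenPoint n b) : a = b := by
  rw [schoenPoint, schoenPoint, Projectivization.mk_eq_mk_iff'] at h
  obtain ⟨c, hc⟩ := h
  have hlast := congrFun hc (Fin.last (n + 1))
  simp only [Pi.smul_apply, Fin.snoc_last, smul_eq_mul, mul_one] at hlast
  funext i
  have hi := congrFun hc (Fin.castSucc i)
  simp only [Pi.smul_apply, Fin.snoc_castSucc, smul_eq_mul, hlast, one_mul] at hi
  exact ((schoen_zeta_prim n).pow_inj (hb i) (ha i) hi).symm

lemma schoenPoint_congr {n : ℕ} {a b : Fin (n + 1) → ℕ}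
    (h : ∀ i, schoenZeta n ^ a i = schoenZeta n ^ b i) : schoenPoint n a = schoenPoint n b := by
  rw [schoenPoint, schoenPoint, Projectivization.mk_eq_mk_iff']
  exact ⟨1, by rw [one_smul]; funext j; induction j using Fin.lastCases with
    | last => simp [Fin.snoc_last]
    | cast i => simp only [Fin.snoc_castSucc]; exact (h i).symm⟩

lemma schoenSing_eq (n : ℕ) :
    schoenSing n =
      {p | ∃ a : Fin (n + 1) → ℕ, (∑ i, a i) % (n + 2) = 0 ∧ p = schoenPoint n a} := by
  ext p
  rw [Set.mem_setOf_eq, mem_schoenSing_iff]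
  constructor
  · intro hg
    have hnz : p.rep ≠ 0 := p.rep_nonzero
    have hall := schoenGood_ne_zero hnz hg
    set c : ℂ := p.rep (Fin.last (n + 1)) with hcdef
    have hc0 : c ≠ 0 := hall _
    set y : Fin (n + 2) → ℂ := c⁻¹ • p.rep with hy
    have hyg : schoenGood n y := schoenGood_smul _ hg
    have hylast : y (Fin.last (n + 1)) = 1 := inv_mul_cancel₀ hc0
    have hkey : ∀ i, y i ^ (n + 2) = ∏ j, y j := fun i => by
      rw [← Finset.mul_prod_erase _ _ (Finset.mem_univ i), ← hyg i, ← pow_succ']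
    have hprod : ∏ j, y j = 1 := by rw [← hkey (Fin.last (n + 1)), hylast, one_pow]
    have hroot : ∀ i, y i ^ (n + 2) = 1 := fun i => (hkey i).trans hprod
    choose a halt haz using fun i : Fin (n + 1) =>
      (schoen_zeta_prim n).eq_pow_of_pow_eq_one (hroot (Fin.castSucc i))
    have hyeq : y = Fin.snoc (fun i => schoenZeta n ^ a i) 1 := by
      funext j
      induction j using Fin.lastCases with
      | last => rw [Fin.snoc_last, hylast]
      | cast i => rw [Fin.snoc_castSucc, haz i]
    refine ⟨a, ?_, ?_⟩
    · have h1 : schoenZeta n ^ (∑ i, a i) = 1 := by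
        rw [← Finset.prod_pow_eq_pow_sum]
        have := hprod
        rw [Fin.prod_univ_castSucc, hylast, mul_one] at this
        rw [← this]
        exact Finset.prod_congr rfl fun i _ => haz i
      obtain ⟨k, hk⟩ := ((schoen_zeta_prim n).pow_eq_one_iff_dvd _).mp h1
      rw [hk]
      exact Nat.mul_mod_right _ _
    · have hyne0 : y ≠ 0 := by
        rw [hyeq]; exact schoenVec_ne_zero n a
      have h2 : p = Projectivization.mk ℂ y hyne0 := by
        rw [← Projectivization.mk_rep p]
        exact ((Projectivization.mk_eq_mk_iff' ..).mpr ⟨c⁻¹, hy.symm⟩).symm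
      rw [h2, schoenPoint]
      exact (Projectivization.mk_eq_mk_iff' ..).mpr ⟨1, by rw [one_smul, hyeq]⟩
  · rintro ⟨a, ha, rfl⟩
    rw [show schoenPoint n a =
        Projectivization.mk ℂ _ (schoenVec_ne_zero n a) from rfl, schoenGood_mk_rep_iff]
    exact schoenGood_vec ha

noncomputable def sumZeroEquiv (n : ℕ) :
    {v : Fin (n + 1) → ZMod (n + 2) // ∑ i, v i = 0} ≃ (Fin n → ZMod (n + 2)) where
  toFun v i := v.1 i.castSucc
  invFun w := ⟨Fin.snoc w (-∑ i, w i), by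
    rw [Fin.sum_univ_castSucc]
    simp [Fin.snoc_castSucc, Fin.snoc_last]⟩
  left_inv v := by
    ext j
    induction j using Fin.lastCases with
    | last =>
      have h := v.2
      rw [Fin.sum_univ_castSucc] at h
      simp only [Fin.snoc_last]
      exact (eq_neg_of_add_eq_zero_right h).symm
    | cast i => simp [Fin.snoc_castSucc]
  right_inv w := by funext i; simp [Fin.snoc_castSucc]

lemma schoenSing_ncard (n : ℕ) : (schoenSing n).ncard = (n + 2) ^ n := by
  rw [schoenSing_eq]
  have hrepr : {p | ∃ a : Fin (n + 1) → ℕ, (∑ i, a i) % (n + 2) = 0 ∧ p = schoenPoint n a} =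
      (fun v : Fin (n + 1) → ZMod (n + 2) => schoenPoint n (fun i => (v i).val)) ''
        {v | ∑ i, v i = 0} := by
    ext p
    constructor
    · rintro ⟨a, ha, rfl⟩
      refine ⟨fun i => (a i : ZMod (n + 2)), ?_, ?_⟩
      · show (∑ i, ((a i : ℕ) : ZMod (n + 2))) = 0
        rw [← Nat.cast_sum, ZMod.natCast_eq_zero_iff]
        exact Nat.dvd_of_mod_eq_zero ha
      · refine (schoenPoint_congr fun i => ?_).symm
        rw [ZMod.val_natCast, ← schoenZeta_pow_mod]
    · rintro ⟨v, hv, rfl⟩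
      refine ⟨fun i => (v i).val, ?_, rfl⟩
      have h1 : ((∑ i, (v i).val : ℕ) : ZMod (n + 2)) = 0 := by
        rw [Nat.cast_sum]
        have : ∀ i, (((v i).val : ℕ) : ZMod (n + 2)) = v i := fun i => ZMod.natCast_rightInverse _
        rw [Finset.sum_congr rfl fun i _ => this i]
        exact hv
      obtain ⟨k, hk⟩ := (ZMod.natCast_eq_zero_iff _ _).mp h1
      rw [hk]
      exact Nat.mul_mod_right _ _
  rw [hrepr]
  have hinj : Function.Injective
      (fun v : Fin (n + 1) → ZMod (n + 2) => schoenPoint n (fun i => (v i).val)) := by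
    intro v w h
    have := schoenPoint_inj (fun i => ZMod.val_lt _) (fun i => ZMod.val_lt _) h
    funext i
    have hi := congrFun this i
    calc v i = (((v i).val : ℕ) : ZMod (n + 2)) := (ZMod.natCast_rightInverse _).symm
      _ = (((w i).val : ℕ) : ZMod (n + 2)) := by rw [hi]
      _ = w i := ZMod.natCast_rightInverse _
  rw [Set.ncard_image_of_injective _ hinj, ← Nat.card_coe_set_eq]
  have h2 : Nat.card ({v : Fin (n + 1) → ZMod (n + 2) // ∑ i, v i = 0}) = (n + 2) ^ n := by
    rw [Nat.card_congr (sumZeroEquiv n), Nat.card_fun, Nat.card_eq_fintype_card,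
      Nat.card_eq_fintype_card, ZMod.card, Fintype.card_fin]
  exact h2

theorem stmt_12 (n : ℕ) :
    schoenSing n =
        {p | ∃ a : Fin (n + 1) → ℕ, (∑ i, a i) % (n + 2) = 0 ∧ p = schoenPoint n a} ∧
      (schoenSing n).ncard = (n + 2) ^ n :=
  ⟨schoenSing_eq n, schoenSing_ncard n⟩
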